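/- arXiv:2205.01808 — 2 statements merged into one kernel-verified Lean document; each statement's English description precedes it below -/
import Mathlib

section
/- Assume λ < 0 and μ > 0. Let v₁ ≠ 0 in ℝ², let w₂ = t v₁ with 0 < t < 1, let w₁ ∈ C_A(v₁, 0) with w₁ ≠ w₂, and let σ ∈ [0, π] satisfy w₁ − w₂ = (|w₁ − w₂|/|v₁|) R_σ v₁. Then φ_A((π − σ)/μ, w₁, w₂) = (1 − e^{λ(π − σ)/μ} |w₁ − w₂|/|w₂|) w₂, and this point lies on the closed segment joining e^{(π/μ)A} v₁ = −e^{πλ/μ} v₁ and v₁. -/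
noncomputable section

open Real Set RealInnerProductSpace

/-- The Euclidean plane. -/
abbrev E2 : Type := EuclideanSpace ℝ (Fin 2)

/-- The vector `(a, b)` in the Euclidean plane. -/
def vec2 (a b : ℝ) : E2 := !₂[a, b]

/-- Counterclockwise rotation of angle `φ`. -/
def rotMap (φ : ℝ) (v : E2) : E2 :=
  vec2 (Real.cos φ * v 0 - Real.sin φ * v 1) (Real.sin φ * v 0 + Real.cos φ * v 1)

/-- `θ`, the counterclockwise rotation by `π/2`. -/
def thetaMap (v : E2) : E2 := vec2 (-(v 1)) (v 0)

/-- The linear map with matrix `A = ((l, -m), (m, l))`. -/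
def Amap (l m : ℝ) (v : E2) : E2 := vec2 (l * v 0 - m * v 1) (m * v 0 + l * v 1)

/-- The inverse `A⁻¹` of the matrix `A = ((l, -m), (m, l))` (with `det A = l² + m² ≠ 0`). -/
def AinvMap (l m : ℝ) (v : E2) : E2 :=
  (1 / (l ^ 2 + m ^ 2)) • vec2 (l * v 0 + m * v 1) (-m * v 0 + l * v 1)

/-- The matrix exponential `e^{τA} = e^{τl} R_{τm}` for `A = ((l, -m), (m, l))`. -/
def expA (l m τ : ℝ) (v : E2) : E2 := Real.exp (τ * l) • rotMap (τ * m) v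

/-- The equilibrium `v(u) = -u A⁻¹ η`. -/
def equil (l m : ℝ) (η : E2) (u : ℝ) : E2 := (-u) • AinvMap l m η

/-- The solution `φ(s, v, u) = e^{sA}(v - v(u)) + v(u)` of `ẋ = Ax + uη` for constant control. -/
def phi (l m : ℝ) (η : E2) (s : ℝ) (v : E2) (u : ℝ) : E2 :=
  expA l m s (v - equil l m η u) + equil l m η u

/-- The spiral `φ_A(τ, v₁, v₂) = e^{τA}(v₁ - v₂) + v₂`. -/
def phiA (l m : ℝ) (τ : ℝ) (v₁ v₂ : E2) : E2 := expA l m τ (v₁ - v₂) + v₂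

/-- The region `C_A(v₁, v₂)`. -/
def CA (l m : ℝ) (v₁ v₂ : E2) : Set E2 :=
  {v | 0 ≤ ⟪v - v₂, thetaMap (v₁ - v₂)⟫ ∧
    ∀ τ ∈ Icc (0 : ℝ) (π / m),
      0 ≤ ⟪v - phiA l m τ v₁ v₂, thetaMap (Amap l m (expA l m τ (v₁ - v₂)))⟫}

/-- Concatenated solution associated to a finite list of (time, control) pairs. -/
def trajComp (l m : ℝ) (η : E2) : E2 → List (ℝ × ℝ) → E2
  | v, [] => v
  | v, p :: rest => trajComp l m η (phi l m η p.1 v p.2) rest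

/-- The forward reachable set `R⁺(v)`. -/
def ReachPlus (l m : ℝ) (η : E2) (Ω : Set ℝ) (v : E2) : Set E2 :=
  {w | ∃ L : List (ℝ × ℝ), (∀ p ∈ L, 0 ≤ p.1 ∧ p.2 ∈ Ω) ∧ w = trajComp l m η v L}

/-- The backward reachable set `R⁻(v)` (forward reachable set of the time-reversed system). -/
def ReachMinus (l m : ℝ) (η : E2) (Ω : Set ℝ) (v : E2) : Set E2 :=
  {w | ∃ L : List (ℝ × ℝ), (∀ p ∈ L, p.1 ≤ 0 ∧ p.2 ∈ Ω) ∧ w = trajComp l m η v L}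

/-- An admissible trajectory of the system starting at `v`. -/
def IsAdmissibleTraj (l m : ℝ) (η : E2) (Ω : Set ℝ) (v : E2) (x : ℝ → E2) : Prop :=
  x 0 = v ∧
  ∃ t : ℕ → ℝ, t 0 = 0 ∧ StrictMono t ∧ (∀ M : ℝ, ∃ n, M < t n) ∧
    ∃ u : ℕ → ℝ, (∀ k, u k ∈ Ω) ∧
      ∀ k, ∀ s ∈ Icc (t k) (t (k + 1)), x s = phi l m η (s - t k) (x (t k)) (u k)

/-- An admissible trajectory of the time-reversed system starting at `v`. -/
def IsAdmissibleTrajRev (l m : ℝ) (η : E2) (Ω : Set ℝ) (v : E2) (x : ℝ → E2) : Prop :=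
  x 0 = v ∧
  ∃ t : ℕ → ℝ, t 0 = 0 ∧ StrictMono t ∧ (∀ M : ℝ, ∃ n, M < t n) ∧
    ∃ u : ℕ → ℝ, (∀ k, u k ∈ Ω) ∧
      ∀ k, ∀ s ∈ Icc (t k) (t (k + 1)), x s = phi l m η (-(s - t k)) (x (t k)) (u k)

/-- Conditions (a) and (b) of the definition of a control set. -/
def ControlSetAxioms (l m : ℝ) (η : E2) (Ω : Set ℝ) (D : Set E2) : Prop :=
  (∀ v ∈ D, ∃ x : ℝ → E2, IsAdmissibleTraj l m η Ω v x ∧ ∀ s : ℝ, 0 ≤ s → x s ∈ D) ∧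
  ∀ v ∈ D, D ⊆ closure (ReachPlus l m η Ω v)

/-- A control set: a set satisfying (a) and (b), maximal with respect to set inclusion. -/
def IsControlSet (l m : ℝ) (η : E2) (Ω : Set ℝ) (D : Set E2) : Prop :=
  ControlSetAxioms l m η Ω D ∧
    ∀ D' : Set E2, ControlSetAxioms l m η Ω D' → D ⊆ D' → D' = D

/-- Conditions (a) and (b) of the definition of a control set of the time-reversed system. -/
def ControlSetAxiomsRev (l m : ℝ) (η : E2) (Ω : Set ℝ) (D : Set E2) : Prop :=
  (∀ v ∈ D, ∃ x : ℝ → E2, IsAdmissibleTrajRev l m η Ω v x ∧ ∀ s : ℝ, 0 ≤ s → x s ∈ D) ∧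
  ∀ v ∈ D, D ⊆ closure (ReachMinus l m η Ω v)

/-- A control set of the time-reversed system. -/
def IsControlSetRev (l m : ℝ) (η : E2) (Ω : Set ℝ) (D : Set E2) : Prop :=
  ControlSetAxiomsRev l m η Ω D ∧
    ∀ D' : Set E2, ControlSetAxiomsRev l m η Ω D' → D ⊆ D' → D' = D

/-- `ρ = e^{πλ/μ}`. -/
def rho (l m : ℝ) : ℝ := Real.exp (π * l / m)

/-- The point `P⁺ = ((-u⁺ + ρ u⁻)/(1 - ρ)) A⁻¹ η`. -/
def Pplus (l m : ℝ) (η : E2) (um up : ℝ) : E2 :=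
  ((-up + rho l m * um) / (1 - rho l m)) • AinvMap l m η

/-- The point `P⁻ = ((-u⁻ + ρ u⁺)/(1 - ρ)) A⁻¹ η`. -/
def Pminus (l m : ℝ) (η : E2) (um up : ℝ) : E2 :=
  ((-um + rho l m * up) / (1 - rho l m)) • AinvMap l m η

/-- The region `C = C_A(P⁺, v(u⁻)) ∪ C_A(P⁻, v(u⁺))`. -/
def regionC (l m : ℝ) (η : E2) (um up : ℝ) : Set E2 :=
  CA l m (Pplus l m η um up) (equil l m η um) ∪ CA l m (Pminus l m η um up) (equil l m η up)

/-- The sequence `P₀ = v(u⁺)`, `P_{2n+1} = φ(π/μ, P_{2n}, u⁻)`, `P_{2n+2} = φ(π/μ, P_{2n+1}, u⁺)`. -/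
def Pseq (l m : ℝ) (η : E2) (um up : ℝ) : ℕ → E2
  | 0 => equil l m η up
  | n + 1 => phi l m η (π / m) (Pseq l m η um up n) (if n % 2 = 0 then um else up)

/-- The periodic orbit `O`. -/
def orbitO (l m : ℝ) (η : E2) (um up : ℝ) : Set E2 :=
  (fun s => phi l m η s (Pplus l m η um up) um) '' Icc (0 : ℝ) (π / m) ∪
    (fun s => phi l m η s (Pminus l m η um up) up) '' Icc (0 : ℝ) (π / m)

set_option maxHeartbeats 1000000 in
/-- `φ_A((π - σ)/μ, w₁, w₂) = (1 - e^{λ(π-σ)/μ}|w₁ - w₂|/|w₂|) w₂` lies on the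
segment joining `e^{(π/μ)A} v₁ = -e^{πλ/μ} v₁` and `v₁`. -/
theorem stmt2 (l m : ℝ) (hl : l < 0) (hm : 0 < m) (v₁ w₁ w₂ : E2) (hv : v₁ ≠ 0)
    (t : ℝ) (ht0 : 0 < t) (ht1 : t < 1) (hw₂ : w₂ = t • v₁)
    (hw₁ : w₁ ∈ CA l m v₁ 0) (hw : w₁ ≠ w₂)
    (σ : ℝ) (hσ : σ ∈ Icc (0 : ℝ) π)
    (hangle : w₁ - w₂ = (‖w₁ - w₂‖ / ‖v₁‖) • rotMap σ v₁) :
    phiA l m ((π - σ) / m) w₁ w₂ =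
      (1 - Real.exp (l * (π - σ) / m) * ‖w₁ - w₂‖ / ‖w₂‖) • w₂ ∧
    expA l m (π / m) v₁ = (-Real.exp (π * l / m)) • v₁ ∧
    phiA l m ((π - σ) / m) w₁ w₂ ∈ segment ℝ (expA l m (π / m) v₁) v₁ := by
  obtain ⟨hσ0, hσπ⟩ := hσ
  have hN : (0:ℝ) < ‖v₁‖ := norm_pos_iff.mpr hv
  have hr : (0:ℝ) < ‖w₁ - w₂‖ := norm_pos_iff.mpr (sub_ne_zero_of_ne hw)
  set a := v₁ 0 with ha
  set b := v₁ 1 with hb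
  set N := ‖v₁‖ with hNdef
  set r := ‖w₁ - w₂‖ with hrdef
  set s := Real.sin σ with hs
  set c := Real.cos σ with hc
  have hcs : s ^ 2 + c ^ 2 = 1 := Real.sin_sq_add_cos_sq σ
  have hN2 : a ^ 2 + b ^ 2 = N ^ 2 := by
    rw [hNdef, EuclideanSpace.norm_eq, Real.sq_sqrt (by positivity), Fin.sum_univ_two,
      Real.norm_eq_abs, Real.norm_eq_abs, sq_abs, sq_abs]
  set q := r / N with hq
  have hq0 : 0 < q := div_pos hr hN
  have hw10 : w₁ 0 = t * a + q * (c * a - s * b) := by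
    have h0 := congrArg (fun v : E2 => v 0) hangle
    simp only [PiLp.sub_apply, PiLp.smul_apply, smul_eq_mul, rotMap, vec2,
      Matrix.cons_val_zero, hw₂] at h0 ⊢
    rw [ha, hb, hs, hc]; linarith [h0]
  have hw11 : w₁ 1 = t * b + q * (s * a + c * b) := by
    have h1 := congrArg (fun v : E2 => v 1) hangle
    simp only [PiLp.sub_apply, PiLp.smul_apply, smul_eq_mul, rotMap, vec2,
      Matrix.cons_val_one, Matrix.head_cons, Matrix.cons_val_zero, hw₂] at h1 ⊢
    rw [ha, hb, hs, hc]; linarith [h1]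
  -- Part 2: expA (π/m) v₁ = -ρ • v₁
  have hπm : π / m * m = π := div_mul_cancel₀ _ hm.ne'
  have hel : Real.exp (π / m * l) = Real.exp (π * l / m) := by ring_nf
  have part2 : expA l m (π / m) v₁ = (-Real.exp (π * l / m)) • v₁ := by
    ext i
    fin_cases i <;>
      simp [expA, rotMap, vec2, hπm, hel, Real.cos_pi, Real.sin_pi]
  -- norms
  have hw₂N : ‖w₂‖ = t * N := by
    rw [hw₂, norm_smul, Real.norm_eq_abs, abs_of_pos ht0]
  have hπσm : (π - σ) / m * m = π - σ := div_mul_cancel₀ _ hm.ne'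
  set e := Real.exp (l * (π - σ) / m) with he
  have he' : Real.exp ((π - σ) / m * l) = e := by rw [he]; ring_nf
  have he0 : 0 < e := Real.exp_pos _
  have hcps : Real.cos (π - σ) = -c := by rw [Real.cos_pi_sub, hc]
  have hsps : Real.sin (π - σ) = s := by rw [Real.sin_pi_sub, hs]
  -- Part 1
  have hNN : N * N⁻¹ = 1 := mul_inv_cancel₀ hN.ne'
  have hr' : ‖w₁ - t • v₁‖ = r := by rw [← hw₂]
  have hN' : ‖t • v₁‖ = t * N := by rw [← hw₂, hw₂N]
  have part1 : phiA l m ((π - σ) / m) w₁ w₂ =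
      (1 - Real.exp (l * (π - σ) / m) * ‖w₁ - w₂‖ / ‖w₂‖) • w₂ := by
    ext i
    fin_cases i <;>
      simp only [phiA, expA, PiLp.add_apply, PiLp.smul_apply, PiLp.sub_apply, smul_eq_mul,
        rotMap, vec2, Fin.zero_eta, Fin.mk_one, Matrix.cons_val_zero, Matrix.cons_val_one,
        Matrix.head_cons, hπσm, he', hcps, hsps, hw10, hw11, hw₂N, hw₂, hr', hN', ← ha, ← hb] <;>
      field_simp [hN.ne', ht0.ne']
    · linear_combination (-(e * r * a * (c ^ 2 + s ^ 2))) * hNN + (-(e * r * a)) * hcs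
    · linear_combination (-(e * r * b * (c ^ 2 + s ^ 2))) * hNN + (-(e * r * b)) * hcs
  refine ⟨part1, part2, ?_⟩
  -- key inequality from CA membership
  set k := Real.exp (σ / m * l) with hk
  have hk0 : 0 < k := Real.exp_pos _
  have hσmm : σ / m * m = σ := div_mul_cancel₀ _ hm.ne'
  have hab : (0:ℝ) < a ^ 2 + b ^ 2 := by rw [hN2]; positivity
  have hmem : σ / m ∈ Icc (0:ℝ) (π / m) := ⟨div_nonneg hσ0 hm.le, by gcongr⟩
  have hC := hw₁.2 (σ / m) hmem
  have hX : ⟪w₁ - phiA l m (σ / m) v₁ 0, thetaMap (Amap l m (expA l m (σ / m) (v₁ - 0)))⟫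
      = k * (a ^ 2 + b ^ 2) * (m * k - m * q - t * (l * s) - t * (m * c)) := by
    simp only [phiA, expA, thetaMap, Amap, rotMap, vec2, sub_zero, add_zero,
      PiLp.inner_apply, Fin.sum_univ_two, PiLp.sub_apply, PiLp.smul_apply, PiLp.add_apply,
      smul_eq_mul, Matrix.cons_val_zero, Matrix.cons_val_one, Matrix.head_cons,
      PiLp.zero_apply, mul_zero, zero_mul, add_zero, zero_add, sub_zero,
      hσmm, hw10, hw11, ← ha, ← hb, RCLike.inner_apply, conj_trivial]
    linear_combination (m * k * (k - q) * (a ^ 2 + b ^ 2)) * hcs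
  rw [hX] at hC
  have hG : 0 ≤ m * k - m * q - t * (l * s) - t * (m * c) :=
    nonneg_of_mul_nonneg_right hC (mul_pos hk0 hab)
  clear hC hX hw₁ hangle
  set ρ := Real.exp (π * l / m) with hρ
  have hρ0 : 0 < ρ := Real.exp_pos _
  have hek : e * k = ρ := by
    rw [he, hk, hρ, ← Real.exp_add]
    congr 1; field_simp; ring
  -- the trigonometric-exponential bound
  set x := l * (σ - π) / m with hxdef
  have hx0 : 0 ≤ x := by
    apply div_nonneg _ hm.le
    have h0 : (0:ℝ) ≤ (-l) * (π - σ) := mul_nonneg (by linarith only [hl]) (by linarith only [hσπ])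
    linarith only [h0]
  have hex : e = Real.exp (-x) := by rw [he, hxdef]; congr 1; field_simp; ring
  have hsin : s ≤ π - σ := by
    rw [hs, ← Real.sin_pi_sub]; exact Real.sin_le (by linarith)
  have hcos : -1 ≤ c := by rw [hc]; exact Real.neg_one_le_cos σ
  have hmx : m * x = l * (σ - π) := by rw [hxdef]; field_simp
  have h1 : -(l * s + m * c) ≤ m * Real.exp x := by
    have hA : (0:ℝ) ≤ (-l) * (π - σ - s) :=
      mul_nonneg (by linarith) (by linarith)
    have hB : (0:ℝ) ≤ m * (1 + c) := mul_nonneg hm.le (by linarith)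
    have hD : m * (x + 1) ≤ m * Real.exp x :=
      mul_le_mul_of_nonneg_left (Real.add_one_le_exp x) hm.le
    have hE : m * (x + 1) = l * (σ - π) + m := by rw [mul_add, hmx]; ring
    linarith only [hA, hB, hD, hE, hsin, hcos, hσπ, hl, hm]
  have hkey3 : -(e * (l * s + m * c)) ≤ m := by
    have h2 := mul_le_mul_of_nonneg_left h1 (Real.exp_pos (-x)).le
    have h3 : Real.exp (-x) * (m * Real.exp x) = m := by
      rw [mul_left_comm, ← Real.exp_add]; simp
    calc -(e * (l * s + m * c)) = Real.exp (-x) * -(l * s + m * c) := by rw [hex]; ring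
      _ ≤ Real.exp (-x) * (m * Real.exp x) := h2
      _ = m := h3
  have key2 : e * q ≤ t + ρ := by
    have h5 : e * (m * q) ≤ e * (m * k - t * (l * s) - t * (m * c)) :=
      mul_le_mul_of_nonneg_left (by linarith only [hG]) he0.le
    have h6 : t * -(e * (l * s + m * c)) ≤ t * m :=
      mul_le_mul_of_nonneg_left hkey3 ht0.le
    have h7 : e * (m * k) = m * ρ := by rw [← hek]; ring
    have h8 : m * (e * q) ≤ m * (t + ρ) := by nlinarith only [h5, h6, h7, ht0, hm]
    exact le_of_mul_le_mul_left h8 hm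
  -- segment membership
  set cc := t - e * q with hccdef
  have hP : phiA l m ((π - σ) / m) w₁ w₂ = cc • v₁ := by
    rw [part1, hw₂N, hw₂, hr', smul_smul]
    congr 1
    rw [hccdef, hq]
    field_simp
    ring
  have hcc1 : cc < 1 := by
    have := mul_pos he0 hq0
    rw [hccdef]; linarith only [this, ht1]
  have hcc2 : -ρ ≤ cc := by rw [hccdef]; linarith only [key2]
  rw [hP, part2]
  have h1ρ : (0:ℝ) < 1 + ρ := by linarith
  refine ⟨(1 - cc)/(1+ρ), (cc+ρ)/(1+ρ),
    div_nonneg (by linarith) h1ρ.le, div_nonneg (by linarith) h1ρ.le,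
    by field_simp; ring, ?_⟩
  rw [smul_smul, ← add_smul]
  congr 1
  field_simp
  ring
end
end

section
/- Assume λ < 0 and μ > 0. Then the set C := C_A(P⁺, v(u⁻)) ∪ C_A(P⁻, v(u⁺)) is positively invariant: for every v ∈ C one has R⁺(v) ⊆ C; in particular φ(s, v, u) ∈ C for every v ∈ C, u ∈ Ω = [u⁻, u⁺], and s ≥ 0. -/
noncomputable section

open Real Set RealInnerProductSpace

namespace Stmt8Aux

def gfun (β s : ℝ) : ℝ := Real.cos s + β * Real.sin s

def hfun (β s : ℝ) : ℝ := Real.exp (-β * s) * gfun β s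

lemma hfun_hasDeriv (β s : ℝ) :
    HasDerivAt (hfun β) (-(1 + β ^ 2) * (Real.exp (-β * s) * Real.sin s)) s := by
  have h1 : HasDerivAt (fun t : ℝ => Real.exp (-β * t)) (-β * Real.exp (-β * s)) s := by
    have h0 : HasDerivAt (fun t : ℝ => -β * t) (-β) s := by
      simpa using (hasDerivAt_id s).const_mul (-β)
    simpa [mul_comm] using h0.exp
  have h2 : HasDerivAt (fun t : ℝ => Real.cos t + β * Real.sin t)
      (-Real.sin s + β * Real.cos s) s :=
    (Real.hasDerivAt_cos s).add ((Real.hasDerivAt_sin s).const_mul β)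
  have h3 : HasDerivAt (fun t : ℝ => Real.exp (-β * t) * (Real.cos t + β * Real.sin t)) _ s :=
    h1.mul h2
  have : (fun t : ℝ => Real.exp (-β * t) * (Real.cos t + β * Real.sin t)) = hfun β := by
    funext t; simp [hfun, gfun]
  rw [this] at h3
  convert h3 using 1
  ring

lemma hfun_antitoneOn (β : ℝ) : AntitoneOn (hfun β) (Icc 0 π) := by
  apply antitoneOn_of_deriv_nonpos (convex_Icc 0 π)
  · exact fun x _ => ((hfun_hasDeriv β x).continuousAt).continuousWithinAt
  · exact fun x _ => ((hfun_hasDeriv β x).differentiableAt).differentiableWithinAt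
  · intro x hx
    rw [interior_Icc] at hx
    rw [(hfun_hasDeriv β x).deriv]
    have hs : 0 ≤ Real.sin x := Real.sin_nonneg_of_nonneg_of_le_pi hx.1.le hx.2.le
    have h2 : 0 < 1 + β ^ 2 := by positivity
    nlinarith [Real.exp_pos (-β * x), mul_nonneg (Real.exp_pos (-β * x)).le hs]

lemma hfun_monotoneOn (β : ℝ) : MonotoneOn (hfun β) (Icc (-π) 0) := by
  apply monotoneOn_of_deriv_nonneg (convex_Icc (-π) 0)
  · exact fun x _ => ((hfun_hasDeriv β x).continuousAt).continuousWithinAt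
  · exact fun x _ => ((hfun_hasDeriv β x).differentiableAt).differentiableWithinAt
  · intro x hx
    rw [interior_Icc] at hx
    rw [(hfun_hasDeriv β x).deriv]
    have hs : Real.sin x ≤ 0 := by
      have := Real.sin_nonneg_of_nonneg_of_le_pi (x := -x) (by linarith [hx.2]) (by linarith [hx.1])
      rw [Real.sin_neg] at this; linarith
    have h2 : 0 < 1 + β ^ 2 := by positivity
    nlinarith [Real.exp_pos (-β * x), mul_nonpos_of_nonneg_of_nonpos (Real.exp_pos (-β * x)).le hs]

/-- (a)/(b): `g β s ≤ e^{β s}` for `s ∈ [-π, π]`. -/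
lemma gfun_le_exp {β s : ℝ} (hs : -π ≤ s) (hs' : s ≤ π) : gfun β s ≤ Real.exp (β * s) := by
  have h0 : hfun β 0 = 1 := by simp [hfun, gfun]
  have h : hfun β s ≤ 1 := by
    rcases le_or_gt s 0 with h | h
    · rw [← h0]
      exact hfun_monotoneOn β ⟨hs, h⟩ ⟨by linarith [Real.pi_pos], le_refl 0⟩ h
    · rw [← h0]
      exact hfun_antitoneOn β ⟨le_refl 0, Real.pi_pos.le⟩ ⟨h.le, hs'⟩ h.le
  have he : 0 < Real.exp (β * s) := Real.exp_pos _
  have : Real.exp (β * s) * hfun β s ≤ Real.exp (β * s) * 1 := by nlinarith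
  have key : Real.exp (β * s) * hfun β s = gfun β s := by
    unfold hfun
    rw [← mul_assoc, ← Real.exp_add]
    norm_num
  linarith [key ▸ this]

/-- (c): for `0 ≤ s ≤ t ≤ π`, `e^{β(t-s)} g β s ≥ g β t`. -/
lemma gfun_mono {β s t : ℝ} (h0 : 0 ≤ s) (hst : s ≤ t) (ht : t ≤ π) :
    gfun β t ≤ Real.exp (β * (t - s)) * gfun β s := by
  have h := hfun_antitoneOn β ⟨h0, le_trans hst ht⟩ ⟨le_trans h0 hst, ht⟩ hst
  unfold hfun at h
  have he : 0 < Real.exp (β * t) := Real.exp_pos _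
  have := mul_le_mul_of_nonneg_left h he.le
  have k1 : Real.exp (β * t) * (Real.exp (-β * t) * gfun β t) = gfun β t := by
    rw [← mul_assoc, ← Real.exp_add]; norm_num
  have k2 : Real.exp (β * t) * (Real.exp (-β * s) * gfun β s)
      = Real.exp (β * (t - s)) * gfun β s := by
    rw [← mul_assoc, ← Real.exp_add]; ring_nf
  linarith [k1 ▸ k2 ▸ this]

/-- The linear part `L_t(ξ) = Im(ξ(β-i)e^{-it})` in coordinates `ξ = x + iy`. -/
def Lfun (β x y t : ℝ) : ℝ := (β * y - x) * Real.cos t - (β * x + y) * Real.sin t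

/-- The constraint function `F = L + e^{βt}`. -/
def Ffun (β x y t : ℝ) : ℝ := Lfun β x y t + Real.exp (β * t)

/-- The symmetrized ("T") membership conditions. -/
def Tc (β ρ x y : ℝ) : Prop :=
  ∀ t ∈ Icc (0:ℝ) π, 0 ≤ Ffun β x y t ∧ 0 ≤ Ffun β (1 - ρ - x) (-y) t

/-- The "S" membership conditions (corresponding to `CA`). -/
def Sc (β x y : ℝ) : Prop := 0 ≤ y ∧ ∀ t ∈ Icc (0:ℝ) π, 0 ≤ Ffun β x y t

/-- Coordinates of the point after flowing for time `σ` with control parameter `δ`. -/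
def px (β δ σ x y : ℝ) : ℝ := Real.exp (β * σ) * ((x - δ) * Real.cos σ - y * Real.sin σ) + δ
def py (β δ σ x y : ℝ) : ℝ := Real.exp (β * σ) * ((x - δ) * Real.sin σ + y * Real.cos σ)

lemma Lfun_one (β t : ℝ) : Lfun β 1 0 t = -gfun β t := by
  simp [Lfun, gfun]; ring

lemma Lfun_step (β δ σ x y t : ℝ) :
    Lfun β (px β δ σ x y) (py β δ σ x y) t
      = δ * Lfun β 1 0 t + Real.exp (β * σ) * (Lfun β x y (t - σ) - δ * Lfun β 1 0 (t - σ)) := by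
  simp only [Lfun, px, py, Real.cos_sub, Real.sin_sub]
  ring

lemma Lfun_antiperiod (β x y t : ℝ) : Lfun β x y (t + π) = -Lfun β x y t := by
  simp [Lfun]; ring

lemma Lfun_linear (β c x y t : ℝ) :
    Lfun β (c - x) (-y) t = c * Lfun β 1 0 t - Lfun β x y t := by
  simp [Lfun]; ring

lemma Tc_symm {β ρ x y : ℝ} (h : Tc β ρ x y) : Tc β ρ (1 - ρ - x) (-y) := by
  intro t ht
  have := h t ht
  constructor
  · exact this.2
  · have e1 : (1 - ρ - (1 - ρ - x)) = x := by ring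
    have e2 : -(-y) = y := by ring
    rw [e1, e2]; exact this.1

/-- L1: the `S` conditions imply the symmetrized `T` conditions. -/
lemma Sc_to_Tc {β ρ x y : ℝ} (hβ : β < 0) (hρ : ρ = Real.exp (π * β)) (h : Sc β x y) :
    Tc β ρ x y := by
  obtain ⟨hy, hF⟩ := h
  intro t ht
  refine ⟨hF t ht, ?_⟩
  -- goal: 0 ≤ Ffun β (1-ρ-x) (-y) t
  -- Ffun β (1-ρ-x) (-y) t = (1-ρ) L₁(t) - L(t) + e^{βt}
  --   = -(1-ρ) g(t) + x g(t) + y ĝ(t) + e^{βt}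
  have hexp := Real.exp_pos (β * t)
  have hsin : 0 ≤ Real.sin t := Real.sin_nonneg_of_nonneg_of_le_pi ht.1 ht.2
  have hgle : gfun β t ≤ Real.exp (β * t) :=
    gfun_le_exp (by linarith [ht.1, Real.pi_pos]) ht.2
  have hρ1 : ρ = Real.exp (β * π) := by rw [hρ, mul_comm]
  have hρpos : 0 < ρ := by rw [hρ]; exact Real.exp_pos _
  -- constraints at s = π and s = 0
  have hπ : 0 ≤ Ffun β x y π := hF π ⟨Real.pi_pos.le, le_refl _⟩
  have h0 : 0 ≤ Ffun β x y 0 := hF 0 ⟨le_refl _, Real.pi_pos.le⟩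
  simp only [Ffun, Lfun, Real.cos_pi, Real.sin_pi, Real.cos_zero, Real.sin_zero] at hπ h0
  -- hπ : 0 ≤ (β*y - x)*(-1) - (β*x+y)*0 + exp (β*π)  i.e. x - β y + ρ ≥ 0
  -- h0 : 0 ≤ (β*y - x)*1 + exp 0                     i.e. β y - x + 1 ≥ 0
  rw [← hρ1] at hπ
  rw [show β*(0:ℝ)=0 by ring, Real.exp_zero] at h0
  simp only [Ffun, Lfun]
  -- target: 0 ≤ (β*(-y) - (1-ρ-x))*cos t - (β*(1-ρ-x) + (-y))*sin t + exp (β t)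
  rcases le_or_gt 0 (gfun β t) with hg | hg
  · -- use x - β y ≥ -ρ :  x g + y ĝ = g (x - βy) + (1+β²) y sin t ≥ -ρ g
    have key : -ρ * gfun β t + (1 + β^2) * y * Real.sin t
        ≤ x * gfun β t + y * (Real.sin t - β * Real.cos t) := by
      have h1 : -ρ ≤ x - β * y := by nlinarith
      have h2 : gfun β t * (-ρ) ≤ gfun β t * (x - β * y) := by nlinarith
      simp only [gfun] at h2 ⊢
      nlinarith
    have hyy : 0 ≤ (1 + β^2) * y * Real.sin t := by positivity
    simp only [gfun] at hgle key
    nlinarith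
  · -- use β y - x ≥ -1 :  x g + y ĝ = (-g)(βy - x) + (1+β²) y sin t ≥ g
    have hρg : ρ * gfun β t + Real.exp (β * t) ≥ 0 := by
      have : gfun β (t - π) ≤ Real.exp (β * (t - π)) :=
        gfun_le_exp (by linarith [ht.1]) (by linarith [ht.2, Real.pi_pos])
      have e1 : gfun β (t - π) = -gfun β t := by
        simp [gfun, Real.cos_sub, Real.sin_sub]; ring
      have e2 : Real.exp (β * (t - π)) = Real.exp (β * t) / ρ := by
        rw [hρ1, eq_div_iff (Real.exp_ne_zero _), ← Real.exp_add]; ring_nf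
      rw [e1, e2] at this
      have := mul_le_mul_of_nonneg_left this hρpos.le
      rw [mul_div_cancel₀ _ (ne_of_gt hρpos)] at this
      linarith
    have key : (-gfun β t) * (-1) + (1 + β^2) * y * Real.sin t
        ≤ x * gfun β t + y * (Real.sin t - β * Real.cos t) := by
      have h1 : -1 ≤ β * y - x := by nlinarith
      have h2 : (-gfun β t) * (-1) ≤ (-gfun β t) * (β * y - x) := by nlinarith
      simp only [gfun] at h2 ⊢
      nlinarith
    have hyy : 0 ≤ (1 + β^2) * y * Real.sin t := by positivity
    simp only [gfun] at hρg key
    nlinarith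

/-- Reflection of the step map. -/
lemma px_refl (β ρ δ σ x y : ℝ) :
    px β (1 - ρ - δ) σ (1 - ρ - x) (-y) = 1 - ρ - px β δ σ x y := by
  simp only [px]; ring

lemma py_refl (β ρ δ σ x y : ℝ) :
    py β (1 - ρ - δ) σ (1 - ρ - x) (-y) = -py β δ σ x y := by
  simp only [py]; ring

/-- Half of L2: the first constraint family is preserved by a step of duration `σ ∈ [0, π]`. -/
lemma step_first {β ρ δ σ x y : ℝ} (hβ : β < 0) (hρ : ρ = Real.exp (π * β))
    (hσ0 : 0 ≤ σ) (hσπ : σ ≤ π) (hδ0 : 0 ≤ δ) (hδ1 : δ ≤ 1 - ρ) (h : Tc β ρ x y) :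
    ∀ t ∈ Icc (0:ℝ) π, 0 ≤ Ffun β (px β δ σ x y) (py β δ σ x y) t := by
  intro t ht
  have hρ1 : ρ = Real.exp (β * π) := by rw [hρ, mul_comm]
  have hexpσ : (0:ℝ) < Real.exp (β * σ) := Real.exp_pos _
  rw [Ffun, Lfun_step]
  rw [Lfun_one, Lfun_one]
  set s := t - σ with hs
  have hts : Real.exp (β * σ) * Real.exp (β * s) = Real.exp (β * t) := by
    rw [← Real.exp_add, hs]; ring_nf
  rcases le_or_gt 0 s with hcase | hcase
  · -- s ∈ [0, t] ⊆ [0, π] : use first constraint at s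
    have hc := (h s ⟨hcase, by linarith [ht.2]⟩).1
    rw [Ffun] at hc
    -- F' = δ*(-g t) + e^{βσ}(L(s) + δ g(s)) + e^{βt} ≥ δ(e^{βσ} g s - g t) ≥ 0
    have hmono : gfun β t ≤ Real.exp (β * (t - s)) * gfun β s :=
      gfun_mono hcase (by linarith) ht.2
    rw [show t - s = σ by rw [hs]; ring] at hmono
    nlinarith [mul_le_mul_of_nonneg_left hc hexpσ.le]
  · -- s ∈ [-π, 0) : use second (reflected) constraint at s + π
    have hsge : -π ≤ s := by linarith [ht.1]
    have hc := (h (s + π) ⟨by linarith, by linarith [ht.2, hσ0]⟩).2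
    rw [Ffun, Lfun_linear, Lfun_antiperiod, Lfun_antiperiod, Lfun_one] at hc
    -- hc : 0 ≤ (1-ρ)*(g s) + L(s) + e^{β(s+π)}
    have heρ : Real.exp (β * (s + π)) = ρ * Real.exp (β * s) := by
      rw [hρ1, ← Real.exp_add]; ring_nf
    rw [heρ] at hc
    -- hc : 0 ≤ -(1-ρ)*(-g s) -(-L s) + ρ e^{βs}, i.e. L s ≥ -(1-ρ) g s - ρ e^{βs}
    have hg1 : gfun β s ≤ Real.exp (β * s) := gfun_le_exp hsge (by linarith [Real.pi_pos])
    have hg2 : gfun β t ≤ Real.exp (β * t) :=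
      gfun_le_exp (by linarith [ht.1, Real.pi_pos]) ht.2
    have hmul1 := mul_le_mul_of_nonneg_left hg1 hexpσ.le
    rw [hts] at hmul1
    -- goal: 0 ≤ δ*(-g t) + e^{βσ}(L s + δ g s) + e^{βt}
    nlinarith [mul_le_mul_of_nonneg_left hc hexpσ.le,
      mul_le_mul_of_nonneg_left hmul1 (by linarith : (0:ℝ) ≤ 1 - ρ - δ),
      mul_le_mul_of_nonneg_left hg2 hδ0]

/-- L2: one step of duration `σ ∈ [0, π]` preserves `Tc`. -/
lemma Tc_step {β ρ δ σ x y : ℝ} (hβ : β < 0) (hρ : ρ = Real.exp (π * β))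
    (hσ0 : 0 ≤ σ) (hσπ : σ ≤ π) (hδ0 : 0 ≤ δ) (hδ1 : δ ≤ 1 - ρ)
    (h : Tc β ρ x y) : Tc β ρ (px β δ σ x y) (py β δ σ x y) := by
  intro t ht
  refine ⟨step_first hβ hρ hσ0 hσπ hδ0 hδ1 h t ht, ?_⟩
  have h' : Tc β ρ (1 - ρ - x) (-y) := Tc_symm h
  have := step_first hβ hρ hσ0 hσπ (by linarith : (0:ℝ) ≤ 1 - ρ - δ)
      (by linarith : 1 - ρ - δ ≤ 1 - ρ) h' t ht
  rwa [px_refl, py_refl] at this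

/-- Semigroup property of the step map. -/
lemma px_comp (β δ σ₁ σ₂ x y : ℝ) :
    px β δ σ₂ (px β δ σ₁ x y) (py β δ σ₁ x y) = px β δ (σ₁ + σ₂) x y := by
  have he : Real.exp (β * (σ₁ + σ₂)) = Real.exp (β * σ₁) * Real.exp (β * σ₂) := by
    rw [← Real.exp_add]; ring_nf
  simp only [px, py, he, Real.cos_add, Real.sin_add]
  ring

lemma py_comp (β δ σ₁ σ₂ x y : ℝ) :
    py β δ σ₂ (px β δ σ₁ x y) (py β δ σ₁ x y) = py β δ (σ₁ + σ₂) x y := by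
  have he : Real.exp (β * (σ₁ + σ₂)) = Real.exp (β * σ₁) * Real.exp (β * σ₂) := by
    rw [← Real.exp_add]; ring_nf
  simp only [px, py, he, Real.cos_add, Real.sin_add]
  ring

/-- L3: any nonnegative duration preserves `Tc`. -/
lemma Tc_flow {β ρ δ x y : ℝ} (hβ : β < 0) (hρ : ρ = Real.exp (π * β))
    (hδ0 : 0 ≤ δ) (hδ1 : δ ≤ 1 - ρ) (h : Tc β ρ x y) :
    ∀ σ : ℝ, 0 ≤ σ → Tc β ρ (px β δ σ x y) (py β δ σ x y) := by
  have main : ∀ n : ℕ, ∀ x y : ℝ, Tc β ρ x y → ∀ σ : ℝ, 0 ≤ σ → σ ≤ (n + 1) * π →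
      Tc β ρ (px β δ σ x y) (py β δ σ x y) := by
    intro n
    induction n with
    | zero =>
      intro x y h σ hσ0 hσ1
      exact Tc_step hβ hρ hσ0 (by push_cast at hσ1; linarith) hδ0 hδ1 h
    | succ n ih =>
      intro x y h σ hσ0 hσ1
      rcases le_or_gt σ π with hle | hlt
      · exact Tc_step hβ hρ hσ0 hle hδ0 hδ1 h
      · have h1 : Tc β ρ (px β δ π x y) (py β δ π x y) :=
          Tc_step hβ hρ Real.pi_pos.le (le_refl _) hδ0 hδ1 h
        have h2 := ih _ _ h1 (σ - π) (by linarith) (by push_cast; push_cast at hσ1; linarith)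
        rwa [px_comp, py_comp, show π + (σ - π) = σ by ring] at h2
  intro σ hσ
  obtain ⟨n, hn⟩ := exists_nat_gt (σ / π)
  have hπ := Real.pi_pos
  have : σ ≤ (n + 1) * π := by
    have : σ / π < n + 1 := by push_cast; linarith
    calc σ = σ / π * π := by field_simp
    _ ≤ (n + 1) * π := by nlinarith
  exact main n x y h σ hσ this


/-- Identify `E2` with `ℂ`. -/
def toC (v : E2) : ℂ := ⟨v 0, v 1⟩

lemma vec2_apply0 (a b : ℝ) : vec2 a b 0 = a := rfl
lemma vec2_apply1 (a b : ℝ) : vec2 a b 1 = b := rfl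

lemma toC_vec2 (a b : ℝ) : toC (vec2 a b) = ⟨a, b⟩ := rfl

lemma toC_sub (a b : E2) : toC (a - b) = toC a - toC b := rfl

lemma toC_add (a b : E2) : toC (a + b) = toC a + toC b := rfl

lemma smul_apply0 (c : ℝ) (a : E2) : (c • a) 0 = c * a 0 := rfl
lemma smul_apply1 (c : ℝ) (a : E2) : (c • a) 1 = c * a 1 := rfl

lemma toC_smul (c : ℝ) (a : E2) : toC (c • a) = (c : ℂ) * toC a := by
  simp only [toC, Complex.ext_iff, smul_apply0, smul_apply1, Complex.mul_re, Complex.mul_im,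
    Complex.ofReal_re, Complex.ofReal_im]
  constructor <;> ring

lemma toC_eq_zero {a : E2} (h : toC a = 0) : a = 0 := by
  have h0 : a 0 = 0 := congrArg Complex.re h
  have h1 : a 1 = 0 := congrArg Complex.im h
  ext i
  fin_cases i <;> simp [h0, h1]

lemma inner_theta (a b : E2) : ⟪a, thetaMap b⟫ = (toC a * (starRingEnd ℂ) (toC b)).im := by
  have h1 : ⟪a, thetaMap b⟫ = a 0 * (-(b 1)) + a 1 * b 0 := by
    simp only [PiLp.inner_apply, RCLike.inner_apply, conj_trivial, Fin.sum_univ_two,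
      thetaMap, vec2_apply0, vec2_apply1]
    ring
  have h2 : (toC a * (starRingEnd ℂ) (toC b)).im = -(a 0 * b 1) + a 1 * b 0 := by
    simp [toC, Complex.mul_im]
  rw [h1, h2]
  ring

lemma toC_theta (v : E2) : toC (thetaMap v) = Complex.I * toC v := by
  simp [thetaMap, toC, Complex.ext_iff, vec2_apply0, vec2_apply1]

lemma toC_Amap (l m : ℝ) (v : E2) : toC (Amap l m v) = (⟨l, m⟩ : ℂ) * toC v := by
  simp only [Amap, toC, Complex.ext_iff, Complex.mul_re, Complex.mul_im,
    vec2_apply0, vec2_apply1]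
  exact ⟨trivial, by ring⟩

lemma toC_expA (l m τ : ℝ) (v : E2) :
    toC (expA l m τ v) = Complex.exp ((⟨l, m⟩ : ℂ) * (τ : ℂ)) * toC v := by
  have hre : ((⟨l, m⟩ : ℂ) * (τ : ℂ)).re = τ * l := by
    simp [Complex.mul_re]; ring
  have him : ((⟨l, m⟩ : ℂ) * (τ : ℂ)).im = τ * m := by
    simp [Complex.mul_im]; ring
  simp only [expA, rotMap, toC, Complex.ext_iff, Complex.mul_re, Complex.mul_im,
    Complex.exp_re, Complex.exp_im, hre, him, vec2_apply0, vec2_apply1,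
    smul_apply0, smul_apply1, Complex.ofReal_re, Complex.ofReal_im]
  constructor <;> ring

lemma toC_Ainv (l m : ℝ) (hlm : l ^ 2 + m ^ 2 ≠ 0) (v : E2) :
    (⟨l, m⟩ : ℂ) * toC (AinvMap l m v) = toC v := by
  simp only [AinvMap, toC, Complex.ext_iff, Complex.mul_re, Complex.mul_im,
    vec2_apply0, vec2_apply1, smul_apply0, smul_apply1, Complex.ofReal_re, Complex.ofReal_im]
  constructor <;> (field_simp; ring)

/-- Characterization of membership in `CA` via the normalized complex coordinate. -/
lemma mem_CA_iff {l m : ℝ} (hm : 0 < m) {v₁ v₂ : E2} (v : E2)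
    (hw : toC v₁ - toC v₂ ≠ 0) :
    v ∈ CA l m v₁ v₂ ↔
      Sc (l / m) ((toC v - toC v₂) / (toC v₁ - toC v₂)).re
        ((toC v - toC v₂) / (toC v₁ - toC v₂)).im := by
  set w : ℂ := toC v₁ - toC v₂ with hwdef
  set Xi : ℂ := (toC v - toC v₂) / w with hXi
  have hz : Xi * w = toC v - toC v₂ := div_mul_cancel₀ _ hw
  have hnormSq : 0 < Complex.normSq w := Complex.normSq_pos.mpr hw
  -- first condition
  have e1 : ⟪v - v₂, thetaMap (v₁ - v₂)⟫ = Complex.normSq w * Xi.im := by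
    rw [inner_theta, toC_sub, toC_sub, ← hwdef, ← hz, mul_assoc, Complex.mul_conj]
    simp [Complex.mul_im, mul_comm]
  -- second condition, at each τ
  have key : ∀ τ : ℝ,
      ⟪v - phiA l m τ v₁ v₂, thetaMap (Amap l m (expA l m τ (v₁ - v₂)))⟫
        = (Complex.normSq w * (m * Real.exp (τ * l))) *
            Ffun (l / m) Xi.re Xi.im (τ * m) := by
    intro τ
    rw [inner_theta]
    have hE : toC (expA l m τ (v₁ - v₂)) = Complex.exp ((⟨l, m⟩ : ℂ) * (τ : ℂ)) * w := by
      rw [toC_expA, toC_sub]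
    have hphiA : toC (v - phiA l m τ v₁ v₂)
        = Xi * w - Complex.exp ((⟨l, m⟩ : ℂ) * (τ : ℂ)) * w := by
      rw [toC_sub, phiA, toC_add, hE, hz]; ring
    rw [hphiA, toC_Amap, hE]
    -- reduce to an explicit real identity
    have hre : ((⟨l, m⟩ : ℂ) * (τ : ℂ)).re = τ * l := by
      simp [Complex.mul_re]; ring
    have him : ((⟨l, m⟩ : ℂ) * (τ : ℂ)).im = τ * m := by
      simp [Complex.mul_im]; ring
    have hβ : (l / m) * (τ * m) = τ * l := by field_simp
    rw [Ffun, Lfun, hβ]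
    simp only [Complex.mul_im, Complex.mul_re, Complex.conj_re, Complex.conj_im,
      Complex.exp_re, Complex.exp_im, hre, him,
      Complex.normSq_apply, Complex.sub_re, Complex.sub_im]
    have hm' : m ≠ 0 := ne_of_gt hm
    field_simp
    linear_combination ((w.re * w.re + w.im * w.im) * m * Real.exp (τ * l)) *
      Real.sin_sq_add_cos_sq (τ * m)
  constructor
  · rintro ⟨h1, h2⟩
    refine ⟨?_, ?_⟩
    · rw [e1] at h1
      exact (mul_nonneg_iff_of_pos_left hnormSq).mp h1
    · intro t ht
      have hτ : t / m ∈ Icc (0:ℝ) (π / m) :=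
        ⟨div_nonneg ht.1 hm.le, by gcongr; exact ht.2⟩
      have := h2 (t / m) hτ
      rw [key (t / m), div_mul_cancel₀ t (ne_of_gt hm)] at this
      have hK : 0 < Complex.normSq w * (m * Real.exp (t / m * l)) := by positivity
      exact (mul_nonneg_iff_of_pos_left hK).mp this
  · rintro ⟨h1, h2⟩
    refine ⟨?_, ?_⟩
    · rw [e1]
      exact (mul_nonneg_iff_of_pos_left hnormSq).mpr h1
    · intro τ hτ
      rw [key τ]
      have hK : 0 < Complex.normSq w * (m * Real.exp (τ * l)) := by positivity
      refine (mul_nonneg_iff_of_pos_left hK).mpr ?_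
      refine h2 (τ * m) ⟨mul_nonneg hτ.1 hm.le, ?_⟩
      have := hτ.2
      calc τ * m ≤ (π / m) * m := by nlinarith
        _ = π := by field_simp

/-- `Tc` is equivalent to the disjunction of the two `Sc` conditions. -/
lemma Tc_iff_or {β ρ x y : ℝ} (hβ : β < 0) (hρ : ρ = Real.exp (π * β)) :
    Tc β ρ x y ↔ (Sc β x y ∨ Sc β (1 - ρ - x) (-y)) := by
  constructor
  · intro h
    rcases le_or_gt 0 y with hy | hy
    · exact Or.inl ⟨hy, fun t ht => (h t ht).1⟩
    · exact Or.inr ⟨by linarith, fun t ht => (h t ht).2⟩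
  · rintro (h | h)
    · exact Sc_to_Tc hβ hρ h
    · have := Tc_symm (Sc_to_Tc hβ hρ h)
      have e1 : (1 - ρ - (1 - ρ - x)) = x := by ring
      have e2 : -(-y) = y := by ring
      rwa [e1, e2] at this

section Main

variable {l m : ℝ} {η : E2} {um up : ℝ}

/-- The single-step invariance result. -/
lemma phi_mem_regionC (hl : l < 0) (hm : 0 < m) (hη : η ≠ 0) (hu : um < up)
    {v : E2} (hv : v ∈ regionC l m η um up) {u : ℝ} (huu : u ∈ Icc um up)
    {s : ℝ} (hs : 0 ≤ s) : phi l m η s v u ∈ regionC l m η um up := by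
  -- notation
  set α : ℂ := ⟨l, m⟩ with hα
  have hαne : α ≠ 0 := fun h => (ne_of_gt hm) (congrArg Complex.im h)
  have hlm : l ^ 2 + m ^ 2 ≠ 0 := by positivity
  set W : ℂ := toC (AinvMap l m η) with hW
  have hαW : α * W = toC η := toC_Ainv l m hlm η
  have hWne : W ≠ 0 := by
    intro h
    apply hη
    apply toC_eq_zero
    rw [← hαW, h, mul_zero]
  set β : ℝ := l / m with hβdef
  have hβ : β < 0 := div_neg_of_neg_of_pos hl hm
  set ρ : ℝ := rho l m with hρdef
  have hρ : ρ = Real.exp (π * β) := by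
    rw [hρdef, rho, hβdef, mul_div_assoc]
  have hρ1 : ρ < 1 := by
    rw [hρ]
    have : π * β < 0 := mul_neg_of_pos_of_neg Real.pi_pos hβ
    calc Real.exp (π * β) < Real.exp 0 := Real.exp_lt_exp.mpr this
      _ = 1 := Real.exp_zero
  have hρpos : 0 < ρ := by rw [hρ]; exact Real.exp_pos _
  have h1ρ : (1:ℝ) - ρ ≠ 0 := by linarith
  set κ : ℝ := (um - up) / (1 - ρ) with hκdef
  have hκneg : κ < 0 := div_neg_of_neg_of_pos (by linarith) (by linarith)
  -- the key complex quantities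
  have htoC_Pplus : toC (Pplus l m η um up) = (((-up + ρ * um) / (1 - ρ) : ℝ) : ℂ) * W := by
    rw [Pplus, toC_smul, ← hρdef]
  have htoC_Pminus : toC (Pminus l m η um up) = (((-um + ρ * up) / (1 - ρ) : ℝ) : ℂ) * W := by
    rw [Pminus, toC_smul, ← hρdef]
  have htoC_equil : ∀ u' : ℝ, toC (equil l m η u') = ((-u' : ℝ) : ℂ) * W := fun u' => by
    rw [equil, toC_smul]
  set wC : ℂ := toC (Pplus l m η um up) - toC (equil l m η um) with hwCdef
  have hwC : wC = (κ : ℝ) * W := by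
    rw [hwCdef, htoC_Pplus, htoC_equil, hκdef]
    rw [← sub_mul]
    congr 1
    rw [← Complex.ofReal_sub]
    congr 1
    field_simp
    ring
  have hwCne : wC ≠ 0 := by
    rw [hwC]
    exact mul_ne_zero (Complex.ofReal_ne_zero.mpr (ne_of_lt hκneg)) hWne
  have hw2 : toC (Pminus l m η um up) - toC (equil l m η up) = -wC := by
    have hreal : ((-um + ρ * up) / (1 - ρ)) - (-up) = -κ := by
      rw [hκdef]; field_simp; ring
    rw [htoC_Pminus, htoC_equil, hwC, ← neg_mul, ← sub_mul, ← Complex.ofReal_sub, hreal,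
      Complex.ofReal_neg]
  have hw2ne : toC (Pminus l m η um up) - toC (equil l m η up) ≠ 0 := by
    rw [hw2]; exact neg_ne_zero.mpr hwCne
  have hee : toC (equil l m η up) - toC (equil l m η um) = ((1 - ρ : ℝ) : ℂ) * wC := by
    have hreal : (-up : ℝ) - (-um) = (1 - ρ) * κ := by
      rw [hκdef]; field_simp; ring
    rw [htoC_equil, htoC_equil, hwC, ← mul_assoc, ← sub_mul, ← Complex.ofReal_sub, hreal,
      Complex.ofReal_mul]
  -- the normalized coordinate
  have hXi2 : ∀ x : E2, (toC x - toC (equil l m η up)) / (toC (Pminus l m η um up) -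
      toC (equil l m η up))
      = ((1 - ρ : ℝ) : ℂ) - (toC x - toC (equil l m η um)) / wC := by
    intro x
    have hx : toC x - toC (equil l m η up)
        = (toC x - toC (equil l m η um)) - ((1 - ρ : ℝ) : ℂ) * wC := by
      rw [← hee]; ring
    rw [hw2, hx, div_neg, sub_div, mul_div_assoc, div_self hwCne, mul_one]
    ring
  -- membership characterization via `Tc`
  have hrc : ∀ x : E2, x ∈ regionC l m η um up ↔
      Tc β ρ ((toC x - toC (equil l m η um)) / wC).re
        ((toC x - toC (equil l m η um)) / wC).im := by
    intro x
    rw [regionC, Set.mem_union, mem_CA_iff hm x hwCne, mem_CA_iff hm x hw2ne, ← hwCdef,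
      hXi2 x, ← hβdef]
    have hre2 : ((((1 - ρ : ℝ)) : ℂ) - (toC x - toC (equil l m η um)) / wC).re
        = 1 - ρ - ((toC x - toC (equil l m η um)) / wC).re := by
      simp
    have him2 : ((((1 - ρ : ℝ)) : ℂ) - (toC x - toC (equil l m η um)) / wC).im
        = -(((toC x - toC (equil l m η um)) / wC).im) := by
      simp
    rw [hre2, him2, Tc_iff_or hβ hρ]
  -- control parameter
  set δ : ℝ := (um - u) / κ with hδdef
  have hκ1ρ : κ * (1 - ρ) = um - up := by
    rw [hκdef]; field_simp
  have hδ0 : 0 ≤ δ := by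
    rw [hδdef, le_div_iff_of_neg hκneg]
    nlinarith [huu.1]
  have hδ1 : δ ≤ 1 - ρ := by
    rw [hδdef, div_le_iff_of_neg hκneg]
    nlinarith [huu.2]
  -- the flow step in normalized coordinates
  have heu : toC (equil l m η u) - toC (equil l m η um) = ((δ : ℝ) : ℂ) * wC := by
    have hreal : (-u : ℝ) - (-um) = δ * κ := by
      rw [hδdef, div_mul_cancel₀ _ (ne_of_lt hκneg)]; ring
    rw [htoC_equil, htoC_equil, hwC, ← mul_assoc, ← sub_mul, ← Complex.ofReal_sub, hreal,
      Complex.ofReal_mul]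
  have htoCphi : toC (phi l m η s v u)
      = Complex.exp (α * (s : ℂ)) * (toC v - toC (equil l m η u)) + toC (equil l m η u) := by
    rw [phi, toC_add, toC_expA, toC_sub, hα]
  have hXiphi : (toC (phi l m η s v u) - toC (equil l m η um)) / wC
      = Complex.exp (α * (s : ℂ)) * ((toC v - toC (equil l m η um)) / wC - ((δ : ℝ) : ℂ))
        + ((δ : ℝ) : ℂ) := by
    have h1 : toC v - toC (equil l m η u)
        = (toC v - toC (equil l m η um)) - ((δ : ℝ) : ℂ) * wC := by
      rw [← heu]; ring
    rw [htoCphi, h1, eq_comm, eq_div_iff hwCne]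
    have hZ : (toC v - toC (equil l m η um)) / wC * wC = toC v - toC (equil l m η um) :=
      div_mul_cancel₀ _ hwCne
    linear_combination Complex.exp (α * (s : ℂ)) * hZ - heu
  -- components of the exponential
  have hre : (α * (s : ℂ)).re = β * (s * m) := by
    have h1 : (α * (s : ℂ)).re = l * s := by
      rw [hα]; simp [Complex.mul_re]
    rw [h1, hβdef]
    field_simp
  have him : (α * (s : ℂ)).im = s * m := by
    rw [hα]; simp [Complex.mul_im]; ring
  have hXre : ((toC (phi l m η s v u) - toC (equil l m η um)) / wC).re
      = px β δ (s * m) ((toC v - toC (equil l m η um)) / wC).re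
          ((toC v - toC (equil l m η um)) / wC).im := by
    rw [hXiphi, px]
    simp only [Complex.add_re, Complex.mul_re, Complex.sub_re, Complex.sub_im,
      Complex.ofReal_re, Complex.ofReal_im, Complex.exp_re, Complex.exp_im, hre, him]
    ring
  have hXim : ((toC (phi l m η s v u) - toC (equil l m η um)) / wC).im
      = py β δ (s * m) ((toC v - toC (equil l m η um)) / wC).re
          ((toC v - toC (equil l m η um)) / wC).im := by
    rw [hXiphi, py]
    simp only [Complex.add_im, Complex.mul_im, Complex.sub_re, Complex.sub_im,
      Complex.ofReal_re, Complex.ofReal_im, Complex.exp_re, Complex.exp_im, hre, him]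
    ring
  rw [hrc] at hv
  rw [hrc, hXre, hXim]
  exact Tc_flow hβ hρ hδ0 hδ1 hv (s * m) (by positivity)

end Main

end Stmt8Aux

/-- the region `C = C_A(P⁺, v(u⁻)) ∪ C_A(P⁻, v(u⁺))` is positively invariant. -/
theorem stmt8 (l m : ℝ) (hl : l < 0) (hm : 0 < m) (η : E2) (hη : η ≠ 0)
    (um up : ℝ) (hu : um < up) :
    (∀ v ∈ regionC l m η um up,
      ReachPlus l m η (Icc um up) v ⊆ regionC l m η um up) ∧
    ∀ v ∈ regionC l m η um up, ∀ u ∈ Icc um up, ∀ s : ℝ, 0 ≤ s →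
      phi l m η s v u ∈ regionC l m η um up := by
  refine ⟨?_, fun v hv u hu' s hs => Stmt8Aux.phi_mem_regionC hl hm hη hu hv hu' hs⟩
  intro v hv w hw
  obtain ⟨L, hL, rfl⟩ := hw
  induction L generalizing v with
  | nil => simpa [trajComp] using hv
  | cons p rest ih =>
    have hp := hL p (List.mem_cons_self)
    exact ih _ (Stmt8Aux.phi_mem_regionC hl hm hη hu hv hp.2 hp.1)
      fun q hq => hL q (List.mem_cons_of_mem _ hq)
end
end
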